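/- Let K be a commutative ring, let G be a group, and let x_α, x_β, x_{α+β}, x_{2α+β}, x_{3α+β}, x_{3α+2β} : (K,+) → G be group homomorphisms satisfying, for all a, b ∈ K: (R1) x_β(b)x_α(a) = x_α(a)x_β(b)x_{α+β}(ab)x_{2α+β}(a²b)x_{3α+β}(a³b)x_{3α+2β}(a³b²); (R2) x_{α+β}(b)x_α(a) = x_α(a)x_{α+β}(b)x_{2α+β}(2ab)x_{3α+β}(3a²b)x_{3α+2β}(3ab²); (R3) x_{2α+β}(b)x_α(a) = x_α(a)x_{2α+β}(b)x_{3α+2β}(3ab); (R4) x_{3α+β}(b)x_β(a) = x_β(a)x_{3α+β}(b)x_{3α+2β}(−ab); (R5) x_{2α+β}(b)x_{α+β}(a) = x_{α+β}(a)x_{2α+β}(b)x_{3α+2β}(3ab); and each of the remaining ten pairs among these six one-parameter subgroups commutes elementwise (namely the pairs {x_α, x_{3α+β}}, {x_α, x_{3α+2β}}, {x_β, x_{α+β}}, {x_β, x_{2α+β}}, {x_β, x_{3α+2β}}, {x_{α+β}, x_{3α+β}}, {x_{α+β}, x_{3α+2β}}, {x_{2α+β}, x_{3α+β}}, {x_{2α+β},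 x_{3α+2β}}, {x_{3α+β}, x_{3α+2β}}). (These are the defining commutator relations of the unipotent group of type G₂ over K, with α the short simple root.) Then for every n ≥ 1 and all a₁, …, a_n, b₁, …, b_n ∈ K, setting A_i := a₁ + ⋯ + a_i, B_i := b₁ + ⋯ + b_i, R_i := Σ_{k=1}^i b_k·A_k, S_n := Σ_{i=1}^n b_i·A_i², T_n := Σ_{i=1}^n b_i·A_i³ and U_n := Σ_{i=1}^n b_i²·A_i³ − Σ_{i=1}^n b_i·A_i³·B_{i−1} + 3·Σ_{i=1}^n b_i·A_i²·R_{i−1} (with B₀ = R₀ = 0), one has x_β(b_n)x_α(a_n) ⋯ x_β(b₁)x_α(a₁) = x_α(A_n) · x_β(B_n) · x_{α+β}(R_n) · x_{2α+β}(S_n) · x_{3α+β}(T_n) · x_{3α+2β}(U_n). -/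
import Mathlib


/-- Partial sums `A_i = a₁ + ⋯ + a_i`. -/
def psum {K : Type*} [CommRing K] (a : ℕ → K) (i : ℕ) : K := ∑ k ∈ Finset.Icc 1 i, a k


open Multiplicative in
private lemma hom_merge {K : Type*} [CommRing K] {G : Type*} [Group G]
    (f : Multiplicative K →* G) (u v : K) :
    f (ofAdd u) * f (ofAdd v) = f (ofAdd (u + v)) := by
  rw [ofAdd_add, map_mul]

open Multiplicative in
private lemma hom_merge' {K : Type*} [CommRing K] {G : Type*} [Group G]
    (f : Multiplicative K →* G) (u v : K) (g : G) :
    f (ofAdd u) * (f (ofAdd v) * g) = f (ofAdd (u + v)) * g := by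
  rw [← mul_assoc, hom_merge]

open Multiplicative in
private lemma word_congr {K : Type*} [CommRing K] {G : Type*} [Group G]
    (xa xb xab x2ab x3ab x3a2b : Multiplicative K →* G)
    {u1 u2 u3 u4 u5 u6 v1 v2 v3 v4 v5 v6 : K}
    (h1 : u1 = v1) (h2 : u2 = v2) (h3 : u3 = v3) (h4 : u4 = v4) (h5 : u5 = v5)
    (h6 : u6 = v6) :
    xa (ofAdd u1) * xb (ofAdd u2) * xab (ofAdd u3) * x2ab (ofAdd u4) * x3ab (ofAdd u5) *
      x3a2b (ofAdd u6) =
    xa (ofAdd v1) * xb (ofAdd v2) * xab (ofAdd v3) * x2ab (ofAdd v4) * x3ab (ofAdd v5) *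
      x3a2b (ofAdd v6) := by
  rw [h1, h2, h3, h4, h5, h6]

open Multiplicative in
section
variable {K : Type*} [CommRing K] {G : Type*} [Group G]

private lemma G2step
    (xa xb xab x2ab x3ab x3a2b : Multiplicative K →* G)
    (R1 : ∀ a b : K,
      xb (Multiplicative.ofAdd b) * xa (Multiplicative.ofAdd a) =
      xa (Multiplicative.ofAdd a) * xb (Multiplicative.ofAdd b) *
        xab (Multiplicative.ofAdd (a * b)) * x2ab (Multiplicative.ofAdd (a ^ 2 * b)) *
        x3ab (Multiplicative.ofAdd (a ^ 3 * b)) *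
        x3a2b (Multiplicative.ofAdd (a ^ 3 * b ^ 2)))
    (R2 : ∀ a b : K,
      xab (Multiplicative.ofAdd b) * xa (Multiplicative.ofAdd a) =
      xa (Multiplicative.ofAdd a) * xab (Multiplicative.ofAdd b) *
        x2ab (Multiplicative.ofAdd (2 * a * b)) *
        x3ab (Multiplicative.ofAdd (3 * a ^ 2 * b)) *
        x3a2b (Multiplicative.ofAdd (3 * a * b ^ 2)))
    (R3 : ∀ a b : K,
      x2ab (Multiplicative.ofAdd b) * xa (Multiplicative.ofAdd a) =
      xa (Multiplicative.ofAdd a) * x2ab (Multiplicative.ofAdd b) *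
        x3a2b (Multiplicative.ofAdd (3 * a * b)))
    (R4 : ∀ a b : K,
      x3ab (Multiplicative.ofAdd b) * xb (Multiplicative.ofAdd a) =
      xb (Multiplicative.ofAdd a) * x3ab (Multiplicative.ofAdd b) *
        x3a2b (Multiplicative.ofAdd (-(a * b))))
    (R5 : ∀ a b : K,
      x2ab (Multiplicative.ofAdd b) * xab (Multiplicative.ofAdd a) =
      xab (Multiplicative.ofAdd a) * x2ab (Multiplicative.ofAdd b) *
        x3a2b (Multiplicative.ofAdd (3 * a * b)))
    (C1 : ∀ a b : K, Commute (xa (Multiplicative.ofAdd a)) (x3ab (Multiplicative.ofAdd b)))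
    (C2 : ∀ a b : K, Commute (xa (Multiplicative.ofAdd a)) (x3a2b (Multiplicative.ofAdd b)))
    (C3 : ∀ a b : K, Commute (xb (Multiplicative.ofAdd a)) (xab (Multiplicative.ofAdd b)))
    (C4 : ∀ a b : K, Commute (xb (Multiplicative.ofAdd a)) (x2ab (Multiplicative.ofAdd b)))
    (C5 : ∀ a b : K, Commute (xb (Multiplicative.ofAdd a)) (x3a2b (Multiplicative.ofAdd b)))
    (C6 : ∀ a b : K, Commute (xab (Multiplicative.ofAdd a)) (x3ab (Multiplicative.ofAdd b)))
    (C7 : ∀ a b : K, Commute (xab (Multiplicative.ofAdd a)) (x3a2b (Multiplicative.ofAdd b)))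
    (C8 : ∀ a b : K, Commute (x2ab (Multiplicative.ofAdd a)) (x3ab (Multiplicative.ofAdd b)))
    (C9 : ∀ a b : K, Commute (x2ab (Multiplicative.ofAdd a)) (x3a2b (Multiplicative.ofAdd b)))
    (C10 : ∀ a b : K, Commute (x3ab (Multiplicative.ofAdd a)) (x3a2b (Multiplicative.ofAdd b)))
    (a' b' A B R S T U : K) :
    (xb (ofAdd b') * xa (ofAdd a')) *
      (xa (ofAdd A) * xb (ofAdd B) * xab (ofAdd R) * x2ab (ofAdd S) * x3ab (ofAdd T) *
        x3a2b (ofAdd U)) =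
    xa (ofAdd (A + a')) * xb (ofAdd (B + b')) *
      xab (ofAdd (R + b' * (A + a'))) *
      x2ab (ofAdd (S + b' * (A + a') ^ 2)) *
      x3ab (ofAdd (T + b' * (A + a') ^ 3)) *
      x3a2b (ofAdd (U + (b' ^ 2 * (A + a') ^ 3 - b' * (A + a') ^ 3 * B +
        3 * (b' * (A + a') ^ 2 * R)))) := by
  have R1' : ∀ (a b : K) (g : G), xb (ofAdd b) * (xa (ofAdd a) * g) =
      xa (ofAdd a) * (xb (ofAdd b) * (xab (ofAdd (a*b)) * (x2ab (ofAdd (a^2*b)) *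
        (x3ab (ofAdd (a^3*b)) * (x3a2b (ofAdd (a^3*b^2)) * g))))) := by
    intro a b g; rw [← mul_assoc, R1 a b]; simp only [mul_assoc]
  have R2' : ∀ (a b : K) (g : G), xab (ofAdd b) * (xa (ofAdd a) * g) =
      xa (ofAdd a) * (xab (ofAdd b) * (x2ab (ofAdd (2*a*b)) * (x3ab (ofAdd (3*a^2*b)) *
        (x3a2b (ofAdd (3*a*b^2)) * g)))) := by
    intro a b g; rw [← mul_assoc, R2 a b]; simp only [mul_assoc]
  have R3' : ∀ (a b : K) (g : G), x2ab (ofAdd b) * (xa (ofAdd a) * g) =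
      xa (ofAdd a) * (x2ab (ofAdd b) * (x3a2b (ofAdd (3*a*b)) * g)) := by
    intro a b g; rw [← mul_assoc, R3 a b]; simp only [mul_assoc]
  have R4' : ∀ (a b : K) (g : G), x3ab (ofAdd b) * (xb (ofAdd a) * g) =
      xb (ofAdd a) * (x3ab (ofAdd b) * (x3a2b (ofAdd (-(a*b))) * g)) := by
    intro a b g; rw [← mul_assoc, R4 a b]; simp only [mul_assoc]
  have R5' : ∀ (a b : K) (g : G), x2ab (ofAdd b) * (xab (ofAdd a) * g) =
      xab (ofAdd a) * (x2ab (ofAdd b) * (x3a2b (ofAdd (3*a*b)) * g)) := by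
    intro a b g; rw [← mul_assoc, R5 a b]; simp only [mul_assoc]
  have C1' : ∀ (a b : K) (g : G), x3ab (ofAdd b) * (xa (ofAdd a) * g) =
      xa (ofAdd a) * (x3ab (ofAdd b) * g) := by
    intro a b g; rw [← mul_assoc, ← (C1 a b).eq, mul_assoc]
  have C1'' : ∀ (a b : K), x3ab (ofAdd b) * xa (ofAdd a) = xa (ofAdd a) * x3ab (ofAdd b) :=
    fun a b => ((C1 a b).eq).symm
  have C2' : ∀ (a b : K) (g : G), x3a2b (ofAdd b) * (xa (ofAdd a) * g) =
      xa (ofAdd a) * (x3a2b (ofAdd b) * g) := by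
    intro a b g; rw [← mul_assoc, ← (C2 a b).eq, mul_assoc]
  have C2'' : ∀ (a b : K), x3a2b (ofAdd b) * xa (ofAdd a) = xa (ofAdd a) * x3a2b (ofAdd b) :=
    fun a b => ((C2 a b).eq).symm
  have C3' : ∀ (a b : K) (g : G), xab (ofAdd b) * (xb (ofAdd a) * g) =
      xb (ofAdd a) * (xab (ofAdd b) * g) := by
    intro a b g; rw [← mul_assoc, ← (C3 a b).eq, mul_assoc]
  have C3'' : ∀ (a b : K), xab (ofAdd b) * xb (ofAdd a) = xb (ofAdd a) * xab (ofAdd b) :=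
    fun a b => ((C3 a b).eq).symm
  have C4' : ∀ (a b : K) (g : G), x2ab (ofAdd b) * (xb (ofAdd a) * g) =
      xb (ofAdd a) * (x2ab (ofAdd b) * g) := by
    intro a b g; rw [← mul_assoc, ← (C4 a b).eq, mul_assoc]
  have C4'' : ∀ (a b : K), x2ab (ofAdd b) * xb (ofAdd a) = xb (ofAdd a) * x2ab (ofAdd b) :=
    fun a b => ((C4 a b).eq).symm
  have C5' : ∀ (a b : K) (g : G), x3a2b (ofAdd b) * (xb (ofAdd a) * g) =
      xb (ofAdd a) * (x3a2b (ofAdd b) * g) := by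
    intro a b g; rw [← mul_assoc, ← (C5 a b).eq, mul_assoc]
  have C5'' : ∀ (a b : K), x3a2b (ofAdd b) * xb (ofAdd a) = xb (ofAdd a) * x3a2b (ofAdd b) :=
    fun a b => ((C5 a b).eq).symm
  have C6' : ∀ (a b : K) (g : G), x3ab (ofAdd b) * (xab (ofAdd a) * g) =
      xab (ofAdd a) * (x3ab (ofAdd b) * g) := by
    intro a b g; rw [← mul_assoc, ← (C6 a b).eq, mul_assoc]
  have C6'' : ∀ (a b : K), x3ab (ofAdd b) * xab (ofAdd a) = xab (ofAdd a) * x3ab (ofAdd b) :=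
    fun a b => ((C6 a b).eq).symm
  have C7' : ∀ (a b : K) (g : G), x3a2b (ofAdd b) * (xab (ofAdd a) * g) =
      xab (ofAdd a) * (x3a2b (ofAdd b) * g) := by
    intro a b g; rw [← mul_assoc, ← (C7 a b).eq, mul_assoc]
  have C7'' : ∀ (a b : K), x3a2b (ofAdd b) * xab (ofAdd a) = xab (ofAdd a) * x3a2b (ofAdd b) :=
    fun a b => ((C7 a b).eq).symm
  have C8' : ∀ (a b : K) (g : G), x3ab (ofAdd b) * (x2ab (ofAdd a) * g) =
      x2ab (ofAdd a) * (x3ab (ofAdd b) * g) := by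
    intro a b g; rw [← mul_assoc, ← (C8 a b).eq, mul_assoc]
  have C8'' : ∀ (a b : K), x3ab (ofAdd b) * x2ab (ofAdd a) = x2ab (ofAdd a) * x3ab (ofAdd b) :=
    fun a b => ((C8 a b).eq).symm
  have C9' : ∀ (a b : K) (g : G), x3a2b (ofAdd b) * (x2ab (ofAdd a) * g) =
      x2ab (ofAdd a) * (x3a2b (ofAdd b) * g) := by
    intro a b g; rw [← mul_assoc, ← (C9 a b).eq, mul_assoc]
  have C9'' : ∀ (a b : K), x3a2b (ofAdd b) * x2ab (ofAdd a) = x2ab (ofAdd a) * x3a2b (ofAdd b) :=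
    fun a b => ((C9 a b).eq).symm
  have C10' : ∀ (a b : K) (g : G), x3a2b (ofAdd b) * (x3ab (ofAdd a) * g) =
      x3ab (ofAdd a) * (x3a2b (ofAdd b) * g) := by
    intro a b g; rw [← mul_assoc, ← (C10 a b).eq, mul_assoc]
  have C10'' : ∀ (a b : K), x3a2b (ofAdd b) * x3ab (ofAdd a) = x3ab (ofAdd a) * x3a2b (ofAdd b) :=
    fun a b => ((C10 a b).eq).symm
  simp only [mul_assoc]
  rw [hom_merge' xa a' A, R1']
  simp only [R4', R5', R4, R5,
    C3', C4', C5', C6', C7', C8', C9', C10',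
    C3'', C4'', C5'', C6'', C7'', C8'', C9'', C10'',
    hom_merge, hom_merge']
  ring_nf

end

/-- Normal form in the unipotent group of type `G₂` over a commutative
ring `K` (with `α` the short simple root): given one-parameter subgroups
`x_α, x_β, x_{α+β}, x_{2α+β}, x_{3α+β}, x_{3α+2β}` of a group `G` satisfying the defining
commutator relations of type `G₂`, one has
`x_β(bₙ)x_α(aₙ) ⋯ x_β(b₁)x_α(a₁)
  = x_α(Aₙ) x_β(Bₙ) x_{α+β}(Rₙ) x_{2α+β}(Sₙ) x_{3α+β}(Tₙ) x_{3α+2β}(Uₙ)`. -/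
theorem unipotent_G2_normal_form
    (K : Type*) [CommRing K] {G : Type*} [Group G]
    (xa xb xab x2ab x3ab x3a2b : Multiplicative K →* G)
    (R1 : ∀ a b : K,
      xb (Multiplicative.ofAdd b) * xa (Multiplicative.ofAdd a) =
      xa (Multiplicative.ofAdd a) * xb (Multiplicative.ofAdd b) *
        xab (Multiplicative.ofAdd (a * b)) * x2ab (Multiplicative.ofAdd (a ^ 2 * b)) *
        x3ab (Multiplicative.ofAdd (a ^ 3 * b)) *
        x3a2b (Multiplicative.ofAdd (a ^ 3 * b ^ 2)))
    (R2 : ∀ a b : K,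
      xab (Multiplicative.ofAdd b) * xa (Multiplicative.ofAdd a) =
      xa (Multiplicative.ofAdd a) * xab (Multiplicative.ofAdd b) *
        x2ab (Multiplicative.ofAdd (2 * a * b)) *
        x3ab (Multiplicative.ofAdd (3 * a ^ 2 * b)) *
        x3a2b (Multiplicative.ofAdd (3 * a * b ^ 2)))
    (R3 : ∀ a b : K,
      x2ab (Multiplicative.ofAdd b) * xa (Multiplicative.ofAdd a) =
      xa (Multiplicative.ofAdd a) * x2ab (Multiplicative.ofAdd b) *
        x3a2b (Multiplicative.ofAdd (3 * a * b)))
    (R4 : ∀ a b : K,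
      x3ab (Multiplicative.ofAdd b) * xb (Multiplicative.ofAdd a) =
      xb (Multiplicative.ofAdd a) * x3ab (Multiplicative.ofAdd b) *
        x3a2b (Multiplicative.ofAdd (-(a * b))))
    (R5 : ∀ a b : K,
      x2ab (Multiplicative.ofAdd b) * xab (Multiplicative.ofAdd a) =
      xab (Multiplicative.ofAdd a) * x2ab (Multiplicative.ofAdd b) *
        x3a2b (Multiplicative.ofAdd (3 * a * b)))
    (C1 : ∀ a b : K, Commute (xa (Multiplicative.ofAdd a)) (x3ab (Multiplicative.ofAdd b)))
    (C2 : ∀ a b : K, Commute (xa (Multiplicative.ofAdd a)) (x3a2b (Multiplicative.ofAdd b)))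
    (C3 : ∀ a b : K, Commute (xb (Multiplicative.ofAdd a)) (xab (Multiplicative.ofAdd b)))
    (C4 : ∀ a b : K, Commute (xb (Multiplicative.ofAdd a)) (x2ab (Multiplicative.ofAdd b)))
    (C5 : ∀ a b : K, Commute (xb (Multiplicative.ofAdd a)) (x3a2b (Multiplicative.ofAdd b)))
    (C6 : ∀ a b : K, Commute (xab (Multiplicative.ofAdd a)) (x3ab (Multiplicative.ofAdd b)))
    (C7 : ∀ a b : K, Commute (xab (Multiplicative.ofAdd a)) (x3a2b (Multiplicative.ofAdd b)))
    (C8 : ∀ a b : K, Commute (x2ab (Multiplicative.ofAdd a)) (x3ab (Multiplicative.ofAdd b)))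
    (C9 : ∀ a b : K, Commute (x2ab (Multiplicative.ofAdd a)) (x3a2b (Multiplicative.ofAdd b)))
    (C10 : ∀ a b : K, Commute (x3ab (Multiplicative.ofAdd a)) (x3a2b (Multiplicative.ofAdd b)))
    (n : ℕ) (hn : 1 ≤ n) (a b : ℕ → K) :
    ((List.range n).map (fun i =>
        xb (Multiplicative.ofAdd (b (n - i))) * xa (Multiplicative.ofAdd (a (n - i))))).prod
      =
      xa (Multiplicative.ofAdd (psum a n)) *
      xb (Multiplicative.ofAdd (psum b n)) *
      xab (Multiplicative.ofAdd (∑ i ∈ Finset.Icc 1 n, b i * psum a i)) *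
      x2ab (Multiplicative.ofAdd (∑ i ∈ Finset.Icc 1 n, b i * psum a i ^ 2)) *
      x3ab (Multiplicative.ofAdd (∑ i ∈ Finset.Icc 1 n, b i * psum a i ^ 3)) *
      x3a2b (Multiplicative.ofAdd
        ((∑ i ∈ Finset.Icc 1 n, b i ^ 2 * psum a i ^ 3) -
         (∑ i ∈ Finset.Icc 1 n, b i * psum a i ^ 3 * psum b (i - 1)) +
         3 * ∑ i ∈ Finset.Icc 1 n, b i * psum a i ^ 2 *
           (∑ k ∈ Finset.Icc 1 (i - 1), b k * psum a k))) := by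
  induction n, hn using Nat.le_induction with
  | base =>
      simp only [List.range_succ, List.range_zero, List.nil_append, List.map_cons, List.map_nil, List.prod_cons, List.prod_nil,
        mul_one, Nat.sub_zero]
      rw [R1 (a 1) (b 1)]
      apply word_congr <;>
        simp [psum, Finset.Icc_self, Finset.sum_singleton,
          show Finset.Icc 1 0 = (∅ : Finset ℕ) from Finset.Icc_eq_empty (by omega)] <;>
        ring
  | succ n hn ih =>
      have hsplit : ∀ c : ℕ → K, psum c (n + 1) = psum c n + c (n + 1) := fun c =>
        Finset.sum_Icc_succ_top (Nat.le_add_left 1 n) c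
      rw [List.range_succ_eq_map, List.map_cons, List.map_map, List.prod_cons]
      have hfun : ((fun i => xb (Multiplicative.ofAdd (b (n + 1 - i))) *
            xa (Multiplicative.ofAdd (a (n + 1 - i)))) ∘ Nat.succ) =
          fun i => xb (Multiplicative.ofAdd (b (n - i))) *
            xa (Multiplicative.ofAdd (a (n - i))) := by
        funext i
        simp [Function.comp, Nat.succ_sub_succ]
      rw [hfun, ih, Nat.sub_zero]
      rw [G2step xa xb xab x2ab x3ab x3a2b R1 R2 R3 R4 R5 C1 C2 C3 C4 C5 C6 C7 C8 C9 C10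
        (a (n + 1)) (b (n + 1)) (psum a n) (psum b n)
        (∑ i ∈ Finset.Icc 1 n, b i * psum a i)
        (∑ i ∈ Finset.Icc 1 n, b i * psum a i ^ 2)
        (∑ i ∈ Finset.Icc 1 n, b i * psum a i ^ 3)
        ((∑ i ∈ Finset.Icc 1 n, b i ^ 2 * psum a i ^ 3) -
         (∑ i ∈ Finset.Icc 1 n, b i * psum a i ^ 3 * psum b (i - 1)) +
         3 * ∑ i ∈ Finset.Icc 1 n, b i * psum a i ^ 2 *
           (∑ k ∈ Finset.Icc 1 (i - 1), b k * psum a k))]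
      apply word_congr <;>
        simp only [Finset.sum_Icc_succ_top (Nat.le_add_left 1 n), hsplit,
          Nat.add_sub_cancel] <;>
        ring
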